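/- Let {R,F} be a compatible pair of R-matrices on V⊗V, V = ℂ^N, let A be an associative unital ℂ-algebra, and let M ∈ Mat_N(A) satisfy the quantum matrix algebra relation R₁ M_{1̄} M_{2̄} = M_{1̄} M_{2̄} R₁, where M_{1̄} = M₁ and M_{k+1‾} = F_k M_{k̄} F_k⁻¹. Then for every k ≥ 1 the same relation holds for consecutive copies: R_k M_{k̄} M_{k+1‾} = M_{k̄} M_{k+1‾} R_k in Mat_{N^{k+1}}(A). -/
import Mathlib


open Matrix BigOperators

/-- `X₁ = X ⊗ id` acting on the factors 1,2 of `(ℂ^N)^{⊗3}`. -/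
noncomputable def up12 {N : ℕ} (X : Matrix (Fin N × Fin N) (Fin N × Fin N) ℂ) :
    Matrix (Fin N × Fin N × Fin N) (Fin N × Fin N × Fin N) ℂ :=
  Matrix.of fun p q => X (p.1, p.2.1) (q.1, q.2.1) * (if p.2.2 = q.2.2 then 1 else 0)

/-- `X₂ = id ⊗ X` acting on the factors 2,3 of `(ℂ^N)^{⊗3}`. -/
noncomputable def up23 {N : ℕ} (X : Matrix (Fin N × Fin N) (Fin N × Fin N) ℂ) :
    Matrix (Fin N × Fin N × Fin N) (Fin N × Fin N × Fin N) ℂ :=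
  Matrix.of fun p q => (if p.1 = q.1 then 1 else 0) * X (p.2.1, p.2.2) (q.2.1, q.2.2)

/-- `X₁ = X ⊗ I_N` on two tensor factors, for a matrix over an algebra `A`. -/
def lift1 {N : ℕ} {A : Type} [Ring A] (X : Matrix (Fin N) (Fin N) A) :
    Matrix (Fin N × Fin N) (Fin N × Fin N) A :=
  Matrix.of fun p q => X p.1 q.1 * (if p.2 = q.2 then 1 else 0)

/-- A matrix `X ∈ Mat_N(A)` placed in the (0-indexed) tensor factor `p`
of `V^{⊗k}`, acting as the identity elsewhere. -/
def liftV {N : ℕ} {A : Type} [Ring A] (k : ℕ) (X : Matrix (Fin N) (Fin N) A)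
    (p : ℕ) : Matrix (Fin k → Fin N) (Fin k → Fin N) A :=
  Matrix.of fun v w =>
    if h : p < k then
      X (v ⟨p, h⟩) (w ⟨p, h⟩) *
        (if ∀ j : Fin k, (j : ℕ) ≠ p → v j = w j then 1 else 0)
    else (if v = w then 1 else 0)

/-- A matrix `X ∈ Mat_{N²}(A)` placed in the (0-indexed) tensor factors
`p, p+1` of `V^{⊗k}`; this is the operator `X_{p+1}` in 1-indexed notation. -/
def lift2 {N : ℕ} {A : Type} [Ring A] (k : ℕ)
    (X : Matrix (Fin N × Fin N) (Fin N × Fin N) A) (p : ℕ) :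
    Matrix (Fin k → Fin N) (Fin k → Fin N) A :=
  Matrix.of fun v w =>
    if h : p + 1 < k then
      X (v ⟨p, Nat.lt_of_succ_lt h⟩, v ⟨p + 1, h⟩)
          (w ⟨p, Nat.lt_of_succ_lt h⟩, w ⟨p + 1, h⟩) *
        (if ∀ j : Fin k, (j : ℕ) ≠ p → (j : ℕ) ≠ p + 1 → v j = w j then 1 else 0)
    else (if v = w then 1 else 0)

/-- The `F`-copies of `M` in `Mat_{N^k}(A)`:
`M_{1̄} = M₁` and `M_{n+2‾} = F_{n+1} M_{n+1‾} F_{n+1}⁻¹` (0-indexed: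
`copies k FA FinvA M n` is the copy `M_{n+1‾}`). -/
def copies {N : ℕ} {A : Type} [Ring A] (k : ℕ)
    (FA FinvA : Matrix (Fin N × Fin N) (Fin N × Fin N) A)
    (M : Matrix (Fin N) (Fin N) A) :
    ℕ → Matrix (Fin k → Fin N) (Fin k → Fin N) A
  | 0 => liftV k M 0
  | n + 1 => lift2 k FA n * copies k FA FinvA M n * lift2 k FinvA n

namespace QMA

variable {N k : ℕ} {A : Type} [Ring A]

def upd2 (v : Fin k → Fin N) (p : ℕ) (a b : Fin N) : Fin k → Fin N :=
  fun j => if (j : ℕ) = p then a else if (j : ℕ) = p + 1 then b else v j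

lemma upd2_at_p (v : Fin k → Fin N) (p : ℕ) (a b : Fin N) (h : p < k) :
    upd2 v p a b ⟨p, h⟩ = a := by simp [upd2]

lemma upd2_at_p1 (v : Fin k → Fin N) (p : ℕ) (a b : Fin N) (h : p + 1 < k) :
    upd2 v p a b ⟨p + 1, h⟩ = b := by simp [upd2]

lemma upd2_at_other (v : Fin k → Fin N) (p : ℕ) (a b : Fin N) (j : Fin k)
    (h1 : (j : ℕ) ≠ p) (h2 : (j : ℕ) ≠ p + 1) : upd2 v p a b j = v j := by
  simp [upd2, h1, h2]

lemma lift2_apply (X : Matrix (Fin N × Fin N) (Fin N × Fin N) A) (p : ℕ)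
    (h : p + 1 < k) (v w : Fin k → Fin N) :
    lift2 k X p v w =
      X (v ⟨p, Nat.lt_of_succ_lt h⟩, v ⟨p + 1, h⟩)
          (w ⟨p, Nat.lt_of_succ_lt h⟩, w ⟨p + 1, h⟩) *
        (if ∀ j : Fin k, (j : ℕ) ≠ p → (j : ℕ) ≠ p + 1 → v j = w j then 1 else 0) := by
  simp [lift2, h]

lemma lift2_one (p : ℕ) :
    lift2 k (1 : Matrix (Fin N × Fin N) (Fin N × Fin N) A) p = 1 := by
  ext v w
  by_cases h : p + 1 < k
  · rw [lift2_apply 1 p h, Matrix.one_apply, Matrix.one_apply]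
    by_cases hvw : v = w
    · subst hvw; simp
    · rw [if_neg hvw]
      by_cases hP : (v ⟨p, Nat.lt_of_succ_lt h⟩, v ⟨p + 1, h⟩)
          = (w ⟨p, Nat.lt_of_succ_lt h⟩, w ⟨p + 1, h⟩)
      · rw [if_pos hP, one_mul, if_neg]
        intro hC
        apply hvw
        funext j
        by_cases h1 : (j : ℕ) = p
        · have hj : j = ⟨p, Nat.lt_of_succ_lt h⟩ := Fin.ext h1
          rw [hj]; exact congrArg Prod.fst hP
        · by_cases h2 : (j : ℕ) = p + 1
          · have hj : j = ⟨p + 1, h⟩ := Fin.ext h2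
            rw [hj]; exact congrArg Prod.snd hP
          · exact hC j h1 h2
      · rw [if_neg hP, zero_mul]
  · simp [lift2, h, Matrix.one_apply]

lemma lift2_of_ge (X : Matrix (Fin N × Fin N) (Fin N × Fin N) A) (p : ℕ)
    (h : ¬ p + 1 < k) : lift2 k X p = 1 := by
  ext v w
  simp [lift2, h, Matrix.one_apply]

lemma lift2_apply_mul (X : Matrix (Fin N × Fin N) (Fin N × Fin N) A) (p : ℕ)
    (h : p + 1 < k) (v u : Fin k → Fin N) (e : A) :
    lift2 k X p v u * e =
      if (∀ j : Fin k, (j : ℕ) ≠ p → (j : ℕ) ≠ p + 1 → v j = u j) then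
        X (v ⟨p, Nat.lt_of_succ_lt h⟩, v ⟨p + 1, h⟩)
            (u ⟨p, Nat.lt_of_succ_lt h⟩, u ⟨p + 1, h⟩) * e
      else 0 := by
  rw [lift2_apply X p h]
  by_cases hC : ∀ j : Fin k, (j : ℕ) ≠ p → (j : ℕ) ≠ p + 1 → v j = u j
  · rw [if_pos hC, if_pos hC, mul_one]
  · rw [if_neg hC, if_neg hC, mul_zero, zero_mul]

def upd1 (v : Fin k → Fin N) (p : ℕ) (a : Fin N) : Fin k → Fin N :=
  fun j => if (j : ℕ) = p then a else v j

lemma upd1_at_p (v : Fin k → Fin N) (p : ℕ) (a : Fin N) (h : p < k) :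
    upd1 v p a ⟨p, h⟩ = a := by simp [upd1]

lemma upd1_at_other (v : Fin k → Fin N) (p : ℕ) (a : Fin N) (j : Fin k)
    (h1 : (j : ℕ) ≠ p) : upd1 v p a j = v j := by simp [upd1, h1]

lemma upd1_eq_self (v u : Fin k → Fin N) (p : ℕ) (h : p < k)
    (hu : ∀ j : Fin k, (j : ℕ) ≠ p → v j = u j) :
    upd1 v p (u ⟨p, h⟩) = u := by
  funext j
  by_cases h1 : (j : ℕ) = p
  · have hj : j = ⟨p, h⟩ := Fin.ext h1
    rw [hj, upd1_at_p]
  · rw [upd1_at_other _ _ _ _ h1, hu j h1]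

lemma sum_collapse1 (p : ℕ) (h : p < k)
    (v : Fin k → Fin N) (f : (Fin k → Fin N) → A) :
    (∑ u : Fin k → Fin N,
      if (∀ j : Fin k, (j : ℕ) ≠ p → v j = u j) then f u else 0)
    = ∑ a : Fin N, f (upd1 v p a) := by
  rw [← Finset.sum_filter]
  refine Finset.sum_nbij' (fun u => u ⟨p, h⟩)
    (fun a => upd1 v p a) (fun u _ => Finset.mem_univ _) ?_ ?_ ?_ ?_
  · intro a _
    simp only [Finset.mem_filter, Finset.mem_univ, true_and]
    intro j h1
    exact (upd1_at_other v p a j h1).symm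
  · intro u hu
    simp only [Finset.mem_filter, Finset.mem_univ, true_and] at hu
    exact upd1_eq_self v u p h hu
  · intro a _
    exact upd1_at_p v p a h
  · intro u hu
    simp only [Finset.mem_filter, Finset.mem_univ, true_and] at hu
    show f u = f (upd1 v p (u ⟨p, h⟩))
    rw [upd1_eq_self v u p h hu]

lemma liftV_apply (X : Matrix (Fin N) (Fin N) A) (p : ℕ)
    (h : p < k) (v w : Fin k → Fin N) :
    liftV k X p v w =
      X (v ⟨p, h⟩) (w ⟨p, h⟩) *
        (if ∀ j : Fin k, (j : ℕ) ≠ p → v j = w j then 1 else 0) := by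
  simp [liftV, h]

lemma liftV_apply_mul (X : Matrix (Fin N) (Fin N) A) (p : ℕ)
    (h : p < k) (v u : Fin k → Fin N) (e : A) :
    liftV k X p v u * e =
      if (∀ j : Fin k, (j : ℕ) ≠ p → v j = u j) then
        X (v ⟨p, h⟩) (u ⟨p, h⟩) * e
      else 0 := by
  rw [liftV_apply X p h]
  by_cases hC : ∀ j : Fin k, (j : ℕ) ≠ p → v j = u j
  · rw [if_pos hC, if_pos hC, mul_one]
  · rw [if_neg hC, if_neg hC, mul_zero, zero_mul]

/-- condition lemma: upd2 window at `p`, excluded window at `q`, disjoint. -/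
lemma cond_upd2_win (v w : Fin k → Fin N) (p q : ℕ) (c d : Fin N)
    (hp : p + 1 < k)
    (h1 : p ≠ q) (h2 : p ≠ q + 1) (h3 : p + 1 ≠ q) (h4 : p + 1 ≠ q + 1) :
    (∀ j : Fin k, (j : ℕ) ≠ q → (j : ℕ) ≠ q + 1 → upd2 v p c d j = w j)
    ↔ (c = w ⟨p, Nat.lt_of_succ_lt hp⟩ ∧ d = w ⟨p + 1, hp⟩ ∧
        ∀ j : Fin k, (j : ℕ) ≠ p → (j : ℕ) ≠ p + 1 →
          (j : ℕ) ≠ q → (j : ℕ) ≠ q + 1 → v j = w j) := by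
  constructor
  · intro H
    refine ⟨?_, ?_, ?_⟩
    · rw [← upd2_at_p v p c d (Nat.lt_of_succ_lt hp)]
      exact H ⟨p, Nat.lt_of_succ_lt hp⟩ h1 h2
    · rw [← upd2_at_p1 v p c d hp]
      exact H ⟨p + 1, hp⟩ h3 h4
    · intro j hj1 hj2 hj3 hj4
      rw [← upd2_at_other v p c d j hj1 hj2]
      exact H j hj3 hj4
  · rintro ⟨hc, hd, hrest⟩ j hj1 hj2
    by_cases e1 : (j : ℕ) = p
    · have hj : j = ⟨p, Nat.lt_of_succ_lt hp⟩ := Fin.ext e1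
      rw [hj, upd2_at_p]; exact hc
    · by_cases e2 : (j : ℕ) = p + 1
      · have hj : j = ⟨p + 1, hp⟩ := Fin.ext e2
        rw [hj, upd2_at_p1]; exact hd
      · rw [upd2_at_other v p c d j e1 e2]
        exact hrest j e1 e2 hj1 hj2

/-- condition lemma: upd2 window at `q`, excluded point `r`, disjoint. -/
lemma cond_upd2_pt (v w : Fin k → Fin N) (q r : ℕ) (c d : Fin N)
    (hq : q + 1 < k) (h1 : q ≠ r) (h2 : q + 1 ≠ r) :
    (∀ j : Fin k, (j : ℕ) ≠ r → upd2 v q c d j = w j)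
    ↔ (c = w ⟨q, Nat.lt_of_succ_lt hq⟩ ∧ d = w ⟨q + 1, hq⟩ ∧
        ∀ j : Fin k, (j : ℕ) ≠ q → (j : ℕ) ≠ q + 1 → (j : ℕ) ≠ r → v j = w j) := by
  constructor
  · intro H
    refine ⟨?_, ?_, ?_⟩
    · rw [← upd2_at_p v q c d (Nat.lt_of_succ_lt hq)]
      exact H ⟨q, Nat.lt_of_succ_lt hq⟩ h1
    · rw [← upd2_at_p1 v q c d hq]
      exact H ⟨q + 1, hq⟩ h2
    · intro j hj1 hj2 hj3
      rw [← upd2_at_other v q c d j hj1 hj2]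
      exact H j hj3
  · rintro ⟨hc, hd, hrest⟩ j hj1
    by_cases e1 : (j : ℕ) = q
    · have hj : j = ⟨q, Nat.lt_of_succ_lt hq⟩ := Fin.ext e1
      rw [hj, upd2_at_p]; exact hc
    · by_cases e2 : (j : ℕ) = q + 1
      · have hj : j = ⟨q + 1, hq⟩ := Fin.ext e2
        rw [hj, upd2_at_p1]; exact hd
      · rw [upd2_at_other v q c d j e1 e2]
        exact hrest j e1 e2 hj1

/-- condition lemma: upd1 point at `r`, excluded window `q`, disjoint. -/
lemma cond_upd1_win (v w : Fin k → Fin N) (r q : ℕ) (c : Fin N)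
    (hr : r < k) (h1 : r ≠ q) (h2 : r ≠ q + 1) :
    (∀ j : Fin k, (j : ℕ) ≠ q → (j : ℕ) ≠ q + 1 → upd1 v r c j = w j)
    ↔ (c = w ⟨r, hr⟩ ∧
        ∀ j : Fin k, (j : ℕ) ≠ r → (j : ℕ) ≠ q → (j : ℕ) ≠ q + 1 → v j = w j) := by
  constructor
  · intro H
    refine ⟨?_, ?_⟩
    · rw [← upd1_at_p v r c hr]
      exact H ⟨r, hr⟩ h1 h2
    · intro j hj1 hj2 hj3
      rw [← upd1_at_other v r c j hj1]
      exact H j hj2 hj3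
  · rintro ⟨hc, hrest⟩ j hj1 hj2
    by_cases e1 : (j : ℕ) = r
    · have hj : j = ⟨r, hr⟩ := Fin.ext e1
      rw [hj, upd1_at_p]; exact hc
    · rw [upd1_at_other v r c j e1]
      exact hrest j e1 hj1 hj2

lemma upd2_eq_self (v u : Fin k → Fin N) (p : ℕ) (h : p + 1 < k)
    (hu : ∀ j : Fin k, (j : ℕ) ≠ p → (j : ℕ) ≠ p + 1 → v j = u j) :
    upd2 v p (u ⟨p, Nat.lt_of_succ_lt h⟩) (u ⟨p + 1, h⟩) = u := by
  funext j
  by_cases h1 : (j : ℕ) = p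
  · have hj : j = ⟨p, Nat.lt_of_succ_lt h⟩ := Fin.ext h1
    rw [hj, upd2_at_p]
  · by_cases h2 : (j : ℕ) = p + 1
    · have hj : j = ⟨p + 1, h⟩ := Fin.ext h2
      rw [hj, upd2_at_p1]
    · rw [upd2_at_other _ _ _ _ _ h1 h2, hu j h1 h2]

lemma upd2_cond_iff (v w : Fin k → Fin N) (p : ℕ) (a b : Fin N) :
    (∀ j : Fin k, (j : ℕ) ≠ p → (j : ℕ) ≠ p + 1 → upd2 v p a b j = w j)
    ↔ (∀ j : Fin k, (j : ℕ) ≠ p → (j : ℕ) ≠ p + 1 → v j = w j) := by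
  constructor <;> intro hh j h1 h2
  · rw [← upd2_at_other v p a b j h1 h2]; exact hh j h1 h2
  · rw [upd2_at_other v p a b j h1 h2]; exact hh j h1 h2

lemma sum_collapse2 (p : ℕ) (h : p + 1 < k)
    (v : Fin k → Fin N) (f : (Fin k → Fin N) → A) :
    (∑ u : Fin k → Fin N,
      if (∀ j : Fin k, (j : ℕ) ≠ p → (j : ℕ) ≠ p + 1 → v j = u j) then f u else 0)
    = ∑ ab : Fin N × Fin N, f (upd2 v p ab.1 ab.2) := by
  rw [← Finset.sum_filter]
  refine Finset.sum_nbij' (fun u => (u ⟨p, Nat.lt_of_succ_lt h⟩, u ⟨p + 1, h⟩))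
    (fun ab => upd2 v p ab.1 ab.2) (fun u _ => Finset.mem_univ _) ?_ ?_ ?_ ?_
  · intro ab _
    simp only [Finset.mem_filter, Finset.mem_univ, true_and]
    intro j h1 h2
    exact (upd2_at_other v p ab.1 ab.2 j h1 h2).symm
  · intro u hu
    simp only [Finset.mem_filter, Finset.mem_univ, true_and] at hu
    exact upd2_eq_self v u p h hu
  · intro ab _
    show (upd2 v p ab.1 ab.2 ⟨p, Nat.lt_of_succ_lt h⟩,
          upd2 v p ab.1 ab.2 ⟨p + 1, h⟩) = ab
    rw [upd2_at_p, upd2_at_p1]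
  · intro u hu
    simp only [Finset.mem_filter, Finset.mem_univ, true_and] at hu
    show f u = f (upd2 v p (u ⟨p, Nat.lt_of_succ_lt h⟩) (u ⟨p + 1, h⟩))
    rw [upd2_eq_self v u p h hu]

lemma lift2_mul (X Y : Matrix (Fin N × Fin N) (Fin N × Fin N) A) (p : ℕ)
    (h : p + 1 < k) :
    lift2 k X p * lift2 k Y p = lift2 k (X * Y) p := by
  ext v w
  rw [mul_apply, lift2_apply (X * Y) p h]
  have step : ∀ u : Fin k → Fin N,
      lift2 k X p v u * lift2 k Y p u w =
      if (∀ j : Fin k, (j : ℕ) ≠ p → (j : ℕ) ≠ p + 1 → v j = u j) then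
        X (v ⟨p, Nat.lt_of_succ_lt h⟩, v ⟨p + 1, h⟩)
            (u ⟨p, Nat.lt_of_succ_lt h⟩, u ⟨p + 1, h⟩) *
          (Y (u ⟨p, Nat.lt_of_succ_lt h⟩, u ⟨p + 1, h⟩)
              (w ⟨p, Nat.lt_of_succ_lt h⟩, w ⟨p + 1, h⟩) *
            (if ∀ j : Fin k, (j : ℕ) ≠ p → (j : ℕ) ≠ p + 1 → u j = w j then 1 else 0))
      else 0 := by
    intro u
    rw [lift2_apply X p h, lift2_apply Y p h]
    by_cases h1 : ∀ j : Fin k, (j : ℕ) ≠ p → (j : ℕ) ≠ p + 1 → v j = u j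
    · simp only [if_pos h1, mul_one]
    · simp only [if_neg h1, mul_zero, zero_mul]
  rw [Finset.sum_congr rfl (fun u _ => step u), sum_collapse2 p h,
    Matrix.mul_apply, Finset.sum_mul]
  apply Finset.sum_congr rfl
  intro ab _
  rw [upd2_at_p, upd2_at_p1]
  simp only [upd2_cond_iff, mul_assoc]


lemma lift2_comm_far (X Y : Matrix (Fin N × Fin N) (Fin N × Fin N) A) (a b : ℕ)
    (hab : a + 2 ≤ b) (hc : ∀ i j (c : A), Y i j * c = c * Y i j) :
    lift2 k X a * lift2 k Y b = lift2 k Y b * lift2 k X a := by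
  by_cases hbk : b + 1 < k
  · have hak : a + 1 < k := by omega
    ext v w
    rw [mul_apply, mul_apply]
    have hperm : (∀ j : Fin k, (j : ℕ) ≠ b → (j : ℕ) ≠ b + 1 →
          (j : ℕ) ≠ a → (j : ℕ) ≠ a + 1 → v j = w j)
        ↔ (∀ j : Fin k, (j : ℕ) ≠ a → (j : ℕ) ≠ a + 1 →
          (j : ℕ) ≠ b → (j : ℕ) ≠ b + 1 → v j = w j) :=
      ⟨fun H j h1 h2 h3 h4 => H j h3 h4 h1 h2,
       fun H j h1 h2 h3 h4 => H j h3 h4 h1 h2⟩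
    have hL : ∑ u : Fin k → Fin N, lift2 k X a v u * lift2 k Y b u w
        = X (v ⟨a, Nat.lt_of_succ_lt hak⟩, v ⟨a + 1, hak⟩)
              (w ⟨a, Nat.lt_of_succ_lt hak⟩, w ⟨a + 1, hak⟩) *
            (Y (v ⟨b, Nat.lt_of_succ_lt hbk⟩, v ⟨b + 1, hbk⟩)
                (w ⟨b, Nat.lt_of_succ_lt hbk⟩, w ⟨b + 1, hbk⟩) *
              (if (∀ j : Fin k, (j : ℕ) ≠ a → (j : ℕ) ≠ a + 1 →
                  (j : ℕ) ≠ b → (j : ℕ) ≠ b + 1 → v j = w j) then (1:A) else 0)) := by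
      rw [Finset.sum_congr rfl (fun u _ =>
        lift2_apply_mul X a hak v u (lift2 k Y b u w))]
      rw [sum_collapse2 a hak v (fun u =>
        X (v ⟨a, Nat.lt_of_succ_lt hak⟩, v ⟨a + 1, hak⟩)
          (u ⟨a, Nat.lt_of_succ_lt hak⟩, u ⟨a + 1, hak⟩) * lift2 k Y b u w)]
      have term : ∀ cd : Fin N × Fin N,
          X (v ⟨a, Nat.lt_of_succ_lt hak⟩, v ⟨a + 1, hak⟩)
            (upd2 v a cd.1 cd.2 ⟨a, Nat.lt_of_succ_lt hak⟩,
             upd2 v a cd.1 cd.2 ⟨a + 1, hak⟩) *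
            lift2 k Y b (upd2 v a cd.1 cd.2) w
          = X (v ⟨a, Nat.lt_of_succ_lt hak⟩, v ⟨a + 1, hak⟩) (cd.1, cd.2) *
            (Y (v ⟨b, Nat.lt_of_succ_lt hbk⟩, v ⟨b + 1, hbk⟩)
                (w ⟨b, Nat.lt_of_succ_lt hbk⟩, w ⟨b + 1, hbk⟩) *
              (if (cd.1 = w ⟨a, Nat.lt_of_succ_lt hak⟩ ∧ cd.2 = w ⟨a + 1, hak⟩ ∧
                  ∀ j : Fin k, (j : ℕ) ≠ a → (j : ℕ) ≠ a + 1 →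
                    (j : ℕ) ≠ b → (j : ℕ) ≠ b + 1 → v j = w j) then (1:A) else 0)) := by
        intro cd
        rw [upd2_at_p, upd2_at_p1, lift2_apply Y b hbk]
        rw [upd2_at_other v a cd.1 cd.2 ⟨b, Nat.lt_of_succ_lt hbk⟩
          (by show b ≠ a; omega) (by show b ≠ a + 1; omega)]
        rw [upd2_at_other v a cd.1 cd.2 ⟨b + 1, hbk⟩
          (by show b + 1 ≠ a; omega) (by show b + 1 ≠ a + 1; omega)]
        simp only [cond_upd2_win v w a b cd.1 cd.2 hak
          (by omega) (by omega) (by omega) (by omega)]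
      rw [Finset.sum_congr rfl (fun cd _ => term cd)]
      rw [Finset.sum_eq_single
        (w ⟨a, Nat.lt_of_succ_lt hak⟩, w ⟨a + 1, hak⟩)]
      · simp
      · intro cd _ hne
        have hC : ¬ (cd.1 = w ⟨a, Nat.lt_of_succ_lt hak⟩ ∧ cd.2 = w ⟨a + 1, hak⟩ ∧
            ∀ j : Fin k, (j : ℕ) ≠ a → (j : ℕ) ≠ a + 1 →
              (j : ℕ) ≠ b → (j : ℕ) ≠ b + 1 → v j = w j) := by
          rintro ⟨e1, e2, _⟩
          exact hne (Prod.ext e1 e2)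
        rw [if_neg hC, mul_zero, mul_zero]
      · intro h
        exact absurd (Finset.mem_univ _) h
    have hR : ∑ u : Fin k → Fin N, lift2 k Y b v u * lift2 k X a u w
        = Y (v ⟨b, Nat.lt_of_succ_lt hbk⟩, v ⟨b + 1, hbk⟩)
              (w ⟨b, Nat.lt_of_succ_lt hbk⟩, w ⟨b + 1, hbk⟩) *
            (X (v ⟨a, Nat.lt_of_succ_lt hak⟩, v ⟨a + 1, hak⟩)
                (w ⟨a, Nat.lt_of_succ_lt hak⟩, w ⟨a + 1, hak⟩) *
              (if (∀ j : Fin k, (j : ℕ) ≠ a → (j : ℕ) ≠ a + 1 →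
                  (j : ℕ) ≠ b → (j : ℕ) ≠ b + 1 → v j = w j) then (1:A) else 0)) := by
      rw [Finset.sum_congr rfl (fun u _ =>
        lift2_apply_mul Y b hbk v u (lift2 k X a u w))]
      rw [sum_collapse2 b hbk v (fun u =>
        Y (v ⟨b, Nat.lt_of_succ_lt hbk⟩, v ⟨b + 1, hbk⟩)
          (u ⟨b, Nat.lt_of_succ_lt hbk⟩, u ⟨b + 1, hbk⟩) * lift2 k X a u w)]
      have term : ∀ cd : Fin N × Fin N,
          Y (v ⟨b, Nat.lt_of_succ_lt hbk⟩, v ⟨b + 1, hbk⟩)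
            (upd2 v b cd.1 cd.2 ⟨b, Nat.lt_of_succ_lt hbk⟩,
             upd2 v b cd.1 cd.2 ⟨b + 1, hbk⟩) *
            lift2 k X a (upd2 v b cd.1 cd.2) w
          = Y (v ⟨b, Nat.lt_of_succ_lt hbk⟩, v ⟨b + 1, hbk⟩) (cd.1, cd.2) *
            (X (v ⟨a, Nat.lt_of_succ_lt hak⟩, v ⟨a + 1, hak⟩)
                (w ⟨a, Nat.lt_of_succ_lt hak⟩, w ⟨a + 1, hak⟩) *
              (if (cd.1 = w ⟨b, Nat.lt_of_succ_lt hbk⟩ ∧ cd.2 = w ⟨b + 1, hbk⟩ ∧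
                  ∀ j : Fin k, (j : ℕ) ≠ a → (j : ℕ) ≠ a + 1 →
                    (j : ℕ) ≠ b → (j : ℕ) ≠ b + 1 → v j = w j) then (1:A) else 0)) := by
        intro cd
        rw [upd2_at_p, upd2_at_p1, lift2_apply X a hak]
        rw [upd2_at_other v b cd.1 cd.2 ⟨a, Nat.lt_of_succ_lt hak⟩
          (by show a ≠ b; omega) (by show a ≠ b + 1; omega)]
        rw [upd2_at_other v b cd.1 cd.2 ⟨a + 1, hak⟩
          (by show a + 1 ≠ b; omega) (by show a + 1 ≠ b + 1; omega)]
        simp only [cond_upd2_win v w b a cd.1 cd.2 hbk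
          (by omega) (by omega) (by omega) (by omega), hperm]
      rw [Finset.sum_congr rfl (fun cd _ => term cd)]
      rw [Finset.sum_eq_single
        (w ⟨b, Nat.lt_of_succ_lt hbk⟩, w ⟨b + 1, hbk⟩)]
      · simp
      · intro cd _ hne
        have hC : ¬ (cd.1 = w ⟨b, Nat.lt_of_succ_lt hbk⟩ ∧ cd.2 = w ⟨b + 1, hbk⟩ ∧
            ∀ j : Fin k, (j : ℕ) ≠ a → (j : ℕ) ≠ a + 1 →
              (j : ℕ) ≠ b → (j : ℕ) ≠ b + 1 → v j = w j) := by
          rintro ⟨e1, e2, _⟩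
          exact hne (Prod.ext e1 e2)
        rw [if_neg hC, mul_zero, mul_zero]
      · intro h
        exact absurd (Finset.mem_univ _) h
    rw [hL, hR, ← mul_assoc, ← mul_assoc, hc]
  · rw [lift2_of_ge Y b hbk, mul_one, one_mul]

lemma liftV0_comm (M : Matrix (Fin N) (Fin N) A)
    (Y : Matrix (Fin N × Fin N) (Fin N × Fin N) A) (q : ℕ)
    (hq : 1 ≤ q) (hc : ∀ i j (c : A), Y i j * c = c * Y i j) :
    liftV k M 0 * lift2 k Y q = lift2 k Y q * liftV k M 0 := by
  by_cases hqk : q + 1 < k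
  · have h0 : 0 < k := by omega
    ext v w
    rw [mul_apply, mul_apply]
    have hperm : (∀ j : Fin k, (j : ℕ) ≠ q → (j : ℕ) ≠ q + 1 →
          (j : ℕ) ≠ 0 → v j = w j)
        ↔ (∀ j : Fin k, (j : ℕ) ≠ 0 → (j : ℕ) ≠ q → (j : ℕ) ≠ q + 1 → v j = w j) :=
      ⟨fun H j h1 h2 h3 => H j h2 h3 h1, fun H j h1 h2 h3 => H j h3 h1 h2⟩
    have hL : ∑ u : Fin k → Fin N, liftV k M 0 v u * lift2 k Y q u w
        = M (v ⟨0, h0⟩) (w ⟨0, h0⟩) *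
            (Y (v ⟨q, Nat.lt_of_succ_lt hqk⟩, v ⟨q + 1, hqk⟩)
                (w ⟨q, Nat.lt_of_succ_lt hqk⟩, w ⟨q + 1, hqk⟩) *
              (if (∀ j : Fin k, (j : ℕ) ≠ 0 → (j : ℕ) ≠ q →
                  (j : ℕ) ≠ q + 1 → v j = w j) then (1:A) else 0)) := by
      rw [Finset.sum_congr rfl (fun u _ =>
        liftV_apply_mul M 0 h0 v u (lift2 k Y q u w))]
      rw [sum_collapse1 0 h0 v (fun u =>
        M (v ⟨0, h0⟩) (u ⟨0, h0⟩) * lift2 k Y q u w)]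
      have term : ∀ c : Fin N,
          M (v ⟨0, h0⟩) (upd1 v 0 c ⟨0, h0⟩) * lift2 k Y q (upd1 v 0 c) w
          = M (v ⟨0, h0⟩) c *
            (Y (v ⟨q, Nat.lt_of_succ_lt hqk⟩, v ⟨q + 1, hqk⟩)
                (w ⟨q, Nat.lt_of_succ_lt hqk⟩, w ⟨q + 1, hqk⟩) *
              (if (c = w ⟨0, h0⟩ ∧
                  ∀ j : Fin k, (j : ℕ) ≠ 0 → (j : ℕ) ≠ q →
                    (j : ℕ) ≠ q + 1 → v j = w j) then (1:A) else 0)) := by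
        intro c
        rw [upd1_at_p, lift2_apply Y q hqk]
        rw [upd1_at_other v 0 c ⟨q, Nat.lt_of_succ_lt hqk⟩ (by show q ≠ 0; omega)]
        rw [upd1_at_other v 0 c ⟨q + 1, hqk⟩ (by show q + 1 ≠ 0; omega)]
        simp only [cond_upd1_win v w 0 q c h0 (by omega) (by omega)]
      rw [Finset.sum_congr rfl (fun c _ => term c)]
      rw [Finset.sum_eq_single (w ⟨0, h0⟩)]
      · simp
      · intro c _ hne
        have hC : ¬ (c = w ⟨0, h0⟩ ∧
            ∀ j : Fin k, (j : ℕ) ≠ 0 → (j : ℕ) ≠ q →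
              (j : ℕ) ≠ q + 1 → v j = w j) := by
          rintro ⟨e1, _⟩; exact hne e1
        rw [if_neg hC, mul_zero, mul_zero]
      · intro h
        exact absurd (Finset.mem_univ _) h
    have hR : ∑ u : Fin k → Fin N, lift2 k Y q v u * liftV k M 0 u w
        = Y (v ⟨q, Nat.lt_of_succ_lt hqk⟩, v ⟨q + 1, hqk⟩)
              (w ⟨q, Nat.lt_of_succ_lt hqk⟩, w ⟨q + 1, hqk⟩) *
            (M (v ⟨0, h0⟩) (w ⟨0, h0⟩) *
              (if (∀ j : Fin k, (j : ℕ) ≠ 0 → (j : ℕ) ≠ q →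
                  (j : ℕ) ≠ q + 1 → v j = w j) then (1:A) else 0)) := by
      rw [Finset.sum_congr rfl (fun u _ =>
        lift2_apply_mul Y q hqk v u (liftV k M 0 u w))]
      rw [sum_collapse2 q hqk v (fun u =>
        Y (v ⟨q, Nat.lt_of_succ_lt hqk⟩, v ⟨q + 1, hqk⟩)
          (u ⟨q, Nat.lt_of_succ_lt hqk⟩, u ⟨q + 1, hqk⟩) * liftV k M 0 u w)]
      have term : ∀ cd : Fin N × Fin N,
          Y (v ⟨q, Nat.lt_of_succ_lt hqk⟩, v ⟨q + 1, hqk⟩)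
            (upd2 v q cd.1 cd.2 ⟨q, Nat.lt_of_succ_lt hqk⟩,
             upd2 v q cd.1 cd.2 ⟨q + 1, hqk⟩) *
            liftV k M 0 (upd2 v q cd.1 cd.2) w
          = Y (v ⟨q, Nat.lt_of_succ_lt hqk⟩, v ⟨q + 1, hqk⟩) (cd.1, cd.2) *
            (M (v ⟨0, h0⟩) (w ⟨0, h0⟩) *
              (if (cd.1 = w ⟨q, Nat.lt_of_succ_lt hqk⟩ ∧ cd.2 = w ⟨q + 1, hqk⟩ ∧
                  ∀ j : Fin k, (j : ℕ) ≠ 0 → (j : ℕ) ≠ q →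
                    (j : ℕ) ≠ q + 1 → v j = w j) then (1:A) else 0)) := by
        intro cd
        rw [upd2_at_p, upd2_at_p1, liftV_apply M 0 h0]
        rw [upd2_at_other v q cd.1 cd.2 ⟨0, h0⟩
          (by show 0 ≠ q; omega) (by show 0 ≠ q + 1; omega)]
        simp only [cond_upd2_pt v w q 0 cd.1 cd.2 hqk (by omega) (by omega), hperm]
      rw [Finset.sum_congr rfl (fun cd _ => term cd)]
      rw [Finset.sum_eq_single
        (w ⟨q, Nat.lt_of_succ_lt hqk⟩, w ⟨q + 1, hqk⟩)]
      · simp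
      · intro cd _ hne
        have hC : ¬ (cd.1 = w ⟨q, Nat.lt_of_succ_lt hqk⟩ ∧ cd.2 = w ⟨q + 1, hqk⟩ ∧
            ∀ j : Fin k, (j : ℕ) ≠ 0 → (j : ℕ) ≠ q →
              (j : ℕ) ≠ q + 1 → v j = w j) := by
          rintro ⟨e1, e2, _⟩
          exact hne (Prod.ext e1 e2)
        rw [if_neg hC, mul_zero, mul_zero]
      · intro h
        exact absurd (Finset.mem_univ _) h
    rw [hL, hR, ← mul_assoc, ← mul_assoc, hc]
  · rw [lift2_of_ge Y q hqk, mul_one, one_mul]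

def up12A {N : ℕ} {A : Type} [Ring A] (X : Matrix (Fin N × Fin N) (Fin N × Fin N) A) :
    Matrix (Fin N × Fin N × Fin N) (Fin N × Fin N × Fin N) A :=
  Matrix.of fun p q => X (p.1, p.2.1) (q.1, q.2.1) * (if p.2.2 = q.2.2 then 1 else 0)

def up23A {N : ℕ} {A : Type} [Ring A] (X : Matrix (Fin N × Fin N) (Fin N × Fin N) A) :
    Matrix (Fin N × Fin N × Fin N) (Fin N × Fin N × Fin N) A :=
  Matrix.of fun p q => (if p.1 = q.1 then 1 else 0) * X (p.2.1, p.2.2) (q.2.1, q.2.2)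

def lift3 (k : ℕ)
    (W : Matrix (Fin N × Fin N × Fin N) (Fin N × Fin N × Fin N) A) (p : ℕ) :
    Matrix (Fin k → Fin N) (Fin k → Fin N) A :=
  Matrix.of fun v w =>
    if h : p + 2 < k then
      W (v ⟨p, by omega⟩, v ⟨p + 1, by omega⟩, v ⟨p + 2, h⟩)
          (w ⟨p, by omega⟩, w ⟨p + 1, by omega⟩, w ⟨p + 2, h⟩) *
        (if ∀ j : Fin k, (j : ℕ) ≠ p → (j : ℕ) ≠ p + 1 → (j : ℕ) ≠ p + 2 →
            v j = w j then 1 else 0)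
    else (if v = w then 1 else 0)

def upd3 (v : Fin k → Fin N) (p : ℕ) (a b c : Fin N) : Fin k → Fin N :=
  fun j => if (j : ℕ) = p then a else if (j : ℕ) = p + 1 then b
    else if (j : ℕ) = p + 2 then c else v j

lemma upd3_at_p (v : Fin k → Fin N) (p : ℕ) (a b c : Fin N) (h : p < k) :
    upd3 v p a b c ⟨p, h⟩ = a := by simp [upd3]

lemma upd3_at_p1 (v : Fin k → Fin N) (p : ℕ) (a b c : Fin N) (h : p + 1 < k) :
    upd3 v p a b c ⟨p + 1, h⟩ = b := by simp [upd3]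

lemma upd3_at_p2 (v : Fin k → Fin N) (p : ℕ) (a b c : Fin N) (h : p + 2 < k) :
    upd3 v p a b c ⟨p + 2, h⟩ = c := by
  have e1 : p + 2 ≠ p := by omega
  have e2 : p + 2 ≠ p + 1 := by omega
  simp [upd3, e1, e2]

lemma upd3_at_other (v : Fin k → Fin N) (p : ℕ) (a b c : Fin N) (j : Fin k)
    (h1 : (j : ℕ) ≠ p) (h2 : (j : ℕ) ≠ p + 1) (h3 : (j : ℕ) ≠ p + 2) :
    upd3 v p a b c j = v j := by simp [upd3, h1, h2, h3]

lemma upd3_eq_self (v u : Fin k → Fin N) (p : ℕ) (h : p + 2 < k)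
    (hu : ∀ j : Fin k, (j : ℕ) ≠ p → (j : ℕ) ≠ p + 1 → (j : ℕ) ≠ p + 2 → v j = u j) :
    upd3 v p (u ⟨p, by omega⟩) (u ⟨p + 1, by omega⟩) (u ⟨p + 2, h⟩) = u := by
  funext j
  by_cases h1 : (j : ℕ) = p
  · have hj : j = ⟨p, by omega⟩ := Fin.ext h1
    rw [hj, upd3_at_p]
  · by_cases h2 : (j : ℕ) = p + 1
    · have hj : j = ⟨p + 1, by omega⟩ := Fin.ext h2
      rw [hj, upd3_at_p1]
    · by_cases h3 : (j : ℕ) = p + 2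
      · have hj : j = ⟨p + 2, h⟩ := Fin.ext h3
        rw [hj, upd3_at_p2]
      · rw [upd3_at_other _ _ _ _ _ _ h1 h2 h3, hu j h1 h2 h3]

lemma upd3_cond_iff (v w : Fin k → Fin N) (p : ℕ) (a b c : Fin N) :
    (∀ j : Fin k, (j : ℕ) ≠ p → (j : ℕ) ≠ p + 1 → (j : ℕ) ≠ p + 2 →
        upd3 v p a b c j = w j)
    ↔ (∀ j : Fin k, (j : ℕ) ≠ p → (j : ℕ) ≠ p + 1 → (j : ℕ) ≠ p + 2 → v j = w j) := by
  constructor <;> intro hh j h1 h2 h3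
  · rw [← upd3_at_other v p a b c j h1 h2 h3]; exact hh j h1 h2 h3
  · rw [upd3_at_other v p a b c j h1 h2 h3]; exact hh j h1 h2 h3

lemma sum_collapse3 (p : ℕ) (h : p + 2 < k)
    (v : Fin k → Fin N) (f : (Fin k → Fin N) → A) :
    (∑ u : Fin k → Fin N,
      if (∀ j : Fin k, (j : ℕ) ≠ p → (j : ℕ) ≠ p + 1 → (j : ℕ) ≠ p + 2 →
          v j = u j) then f u else 0)
    = ∑ abc : Fin N × Fin N × Fin N, f (upd3 v p abc.1 abc.2.1 abc.2.2) := by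
  rw [← Finset.sum_filter]
  refine Finset.sum_nbij' (fun u => (u ⟨p, by omega⟩, u ⟨p + 1, by omega⟩, u ⟨p + 2, h⟩))
    (fun abc => upd3 v p abc.1 abc.2.1 abc.2.2) (fun u _ => Finset.mem_univ _) ?_ ?_ ?_ ?_
  · intro abc _
    simp only [Finset.mem_filter, Finset.mem_univ, true_and]
    intro j h1 h2 h3
    exact (upd3_at_other v p abc.1 abc.2.1 abc.2.2 j h1 h2 h3).symm
  · intro u hu
    simp only [Finset.mem_filter, Finset.mem_univ, true_and] at hu
    exact upd3_eq_self v u p h hu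
  · intro abc _
    show (upd3 v p abc.1 abc.2.1 abc.2.2 ⟨p, by omega⟩,
          upd3 v p abc.1 abc.2.1 abc.2.2 ⟨p + 1, by omega⟩,
          upd3 v p abc.1 abc.2.1 abc.2.2 ⟨p + 2, h⟩) = abc
    rw [upd3_at_p, upd3_at_p1, upd3_at_p2]
  · intro u hu
    simp only [Finset.mem_filter, Finset.mem_univ, true_and] at hu
    show f u = f (upd3 v p (u ⟨p, by omega⟩) (u ⟨p + 1, by omega⟩) (u ⟨p + 2, h⟩))
    rw [upd3_eq_self v u p h hu]

lemma lift3_apply (W : Matrix (Fin N × Fin N × Fin N) (Fin N × Fin N × Fin N) A)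
    (p : ℕ) (h : p + 2 < k) (v w : Fin k → Fin N) :
    lift3 k W p v w =
      W (v ⟨p, by omega⟩, v ⟨p + 1, by omega⟩, v ⟨p + 2, h⟩)
          (w ⟨p, by omega⟩, w ⟨p + 1, by omega⟩, w ⟨p + 2, h⟩) *
        (if ∀ j : Fin k, (j : ℕ) ≠ p → (j : ℕ) ≠ p + 1 → (j : ℕ) ≠ p + 2 →
            v j = w j then 1 else 0) := by
  simp [lift3, h]

lemma lift3_mul (W W' : Matrix (Fin N × Fin N × Fin N) (Fin N × Fin N × Fin N) A)
    (p : ℕ) (h : p + 2 < k) :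
    lift3 k W p * lift3 k W' p = lift3 k (W * W') p := by
  ext v w
  rw [mul_apply, lift3_apply (W * W') p h]
  have step : ∀ u : Fin k → Fin N,
      lift3 k W p v u * lift3 k W' p u w =
      if (∀ j : Fin k, (j : ℕ) ≠ p → (j : ℕ) ≠ p + 1 → (j : ℕ) ≠ p + 2 →
          v j = u j) then
        W (v ⟨p, by omega⟩, v ⟨p + 1, by omega⟩, v ⟨p + 2, h⟩)
            (u ⟨p, by omega⟩, u ⟨p + 1, by omega⟩, u ⟨p + 2, h⟩) *
          (W' (u ⟨p, by omega⟩, u ⟨p + 1, by omega⟩, u ⟨p + 2, h⟩)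
              (w ⟨p, by omega⟩, w ⟨p + 1, by omega⟩, w ⟨p + 2, h⟩) *
            (if ∀ j : Fin k, (j : ℕ) ≠ p → (j : ℕ) ≠ p + 1 → (j : ℕ) ≠ p + 2 →
                u j = w j then 1 else 0))
      else 0 := by
    intro u
    rw [lift3_apply W p h, lift3_apply W' p h]
    by_cases h1 : ∀ j : Fin k, (j : ℕ) ≠ p → (j : ℕ) ≠ p + 1 → (j : ℕ) ≠ p + 2 →
        v j = u j
    · simp only [if_pos h1, mul_one, mul_assoc]
    · simp only [if_neg h1, mul_zero, zero_mul]
  rw [Finset.sum_congr rfl (fun u _ => step u), sum_collapse3 p h,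
    Matrix.mul_apply, Finset.sum_mul]
  apply Finset.sum_congr rfl
  intro abc _
  rw [upd3_at_p, upd3_at_p1, upd3_at_p2]
  simp only [upd3_cond_iff, mul_assoc]

lemma lift3_up12 (X : Matrix (Fin N × Fin N) (Fin N × Fin N) A) (p : ℕ)
    (h : p + 2 < k) : lift3 k (up12A X) p = lift2 k X p := by
  have h1 : p + 1 < k := by omega
  ext v w
  rw [lift3_apply (up12A X) p h, lift2_apply X p h1]
  show (X (v ⟨p, by omega⟩, v ⟨p + 1, by omega⟩) (w ⟨p, by omega⟩, w ⟨p + 1, by omega⟩) *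
      (if v ⟨p + 2, h⟩ = w ⟨p + 2, h⟩ then (1:A) else 0)) * _ = _
  rw [mul_assoc]
  congr 1
  by_cases e : v ⟨p + 2, h⟩ = w ⟨p + 2, h⟩
  · rw [if_pos e, one_mul]
    have hiff : (∀ j : Fin k, (j : ℕ) ≠ p → (j : ℕ) ≠ p + 1 → (j : ℕ) ≠ p + 2 →
        v j = w j) ↔ (∀ j : Fin k, (j : ℕ) ≠ p → (j : ℕ) ≠ p + 1 → v j = w j) := by
      constructor
      · intro H j hj1 hj2
        by_cases hj3 : (j : ℕ) = p + 2
        · have hj : j = ⟨p + 2, h⟩ := Fin.ext hj3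
          rw [hj]; exact e
        · exact H j hj1 hj2 hj3
      · intro H j hj1 hj2 _
        exact H j hj1 hj2
    simp only [hiff]
  · rw [if_neg e, zero_mul, if_neg]
    intro hC
    exact e (hC ⟨p + 2, h⟩ (by show p + 2 ≠ p; omega) (by show p + 2 ≠ p + 1; omega))

lemma lift3_up23 (X : Matrix (Fin N × Fin N) (Fin N × Fin N) A) (p : ℕ)
    (h : p + 2 < k) : lift3 k (up23A X) p = lift2 k X (p + 1) := by
  have h1 : p + 1 + 1 < k := by omega
  ext v w
  rw [lift3_apply (up23A X) p h, lift2_apply X (p + 1) h1]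
  show ((if v ⟨p, by omega⟩ = w ⟨p, by omega⟩ then (1:A) else 0) *
      X (v ⟨p + 1, by omega⟩, v ⟨p + 2, h⟩) (w ⟨p + 1, by omega⟩, w ⟨p + 2, h⟩)) * _ = _
  by_cases e : v ⟨p, by omega⟩ = w ⟨p, by omega⟩
  · rw [if_pos e, one_mul]
    have hiff : (∀ j : Fin k, (j : ℕ) ≠ p → (j : ℕ) ≠ p + 1 → (j : ℕ) ≠ p + 2 →
        v j = w j) ↔ (∀ j : Fin k, (j : ℕ) ≠ p + 1 → (j : ℕ) ≠ p + 1 + 1 →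
        v j = w j) := by
      constructor
      · intro H j hj1 hj2
        by_cases hj0 : (j : ℕ) = p
        · have hj : j = ⟨p, by omega⟩ := Fin.ext hj0
          rw [hj]; exact e
        · exact H j hj0 hj1 (by omega)
      · intro H j _ hj1 hj2
        exact H j hj1 (by omega)
    simp only [hiff]
  · have hC : ¬ (∀ j : Fin k, (j : ℕ) ≠ p + 1 → (j : ℕ) ≠ p + 1 + 1 → v j = w j) := by
      intro hC
      exact e (hC ⟨p, by omega⟩ (by show p ≠ p + 1; omega) (by show p ≠ p + 1 + 1; omega))
    rw [if_neg e, zero_mul, zero_mul, if_neg hC, mul_zero]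

lemma liftV_eq_lift2 (M : Matrix (Fin N) (Fin N) A) (h : 1 < k) :
    liftV k M 0 = lift2 k (lift1 M) 0 := by
  have h0 : 0 < k := by omega
  ext v w
  rw [liftV_apply M 0 h0, lift2_apply (lift1 M) 0 h]
  show _ = (M (v ⟨0, h0⟩) (w ⟨0, h0⟩) *
      (if v ⟨0 + 1, h⟩ = w ⟨0 + 1, h⟩ then (1:A) else 0)) * _
  rw [mul_assoc]
  congr 1
  by_cases e : v ⟨0 + 1, h⟩ = w ⟨0 + 1, h⟩
  · rw [if_pos e, one_mul]
    have hiff : (∀ j : Fin k, (j : ℕ) ≠ 0 → v j = w j)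
        ↔ (∀ j : Fin k, (j : ℕ) ≠ 0 → (j : ℕ) ≠ 0 + 1 → v j = w j) := by
      constructor
      · intro H j hj1 _
        exact H j hj1
      · intro H j hj1
        by_cases hj2 : (j : ℕ) = 0 + 1
        · have hj : j = ⟨0 + 1, h⟩ := Fin.ext hj2
          rw [hj]; exact e
        · exact H j hj1 hj2
    simp only [hiff]
  · rw [if_neg e, zero_mul, if_neg]
    intro hC
    exact e (hC ⟨0 + 1, h⟩ (by show 0 + 1 ≠ 0; omega))

lemma step_abstract {S : Type} [Monoid S] {G Gi G' Gi' R R' Y Z : S}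
    (hZ : Z = G * (Y * Gi))
    (hgi1 : G * Gi = 1) (hgi2 : Gi * G = 1) (hgi3 : G' * Gi' = 1) (hgi4 : Gi' * G' = 1)
    (braid : G * G' * G = G' * G * G')
    (compat : G * G' * R = R' * G * G')
    (cY : Y * G' = G' * Y) (cYi : Y * Gi' = Gi' * Y)
    (IH : R * Y * Z = Y * Z * R) :
    R' * Z * (G' * Z * Gi') = Z * (G' * Z * Gi') * R' := by
  have h1' : ∀ x : S, G * (Gi * x) = x := fun x => by rw [← mul_assoc, hgi1, one_mul]
  have h2' : ∀ x : S, Gi * (G * x) = x := fun x => by rw [← mul_assoc, hgi2, one_mul]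
  have h3' : ∀ x : S, G' * (Gi' * x) = x := fun x => by rw [← mul_assoc, hgi3, one_mul]
  have h4' : ∀ x : S, Gi' * (G' * x) = x := fun x => by rw [← mul_assoc, hgi4, one_mul]
  have braid' : ∀ x : S, G * (G' * (G * x)) = G' * (G * (G' * x)) := fun x => by
    have hb := congrArg (· * x) braid
    simpa [mul_assoc] using hb
  have compat' : ∀ x : S, R' * (G * (G' * x)) = G * (G' * (R * x)) := fun x => by
    have hb := congrArg (· * x) compat
    simpa [mul_assoc] using hb.symm
  have cY' : ∀ x : S, Y * (G' * x) = G' * (Y * x) := fun x => by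
    rw [← mul_assoc, cY, mul_assoc]
  have cYi' : ∀ x : S, Gi' * (Y * x) = Y * (Gi' * x) := fun x => by
    rw [← mul_assoc, ← cYi, mul_assoc]
  have IH' : ∀ x : S, R * (Y * (Z * x)) = Y * (Z * (R * x)) := fun x => by
    have hb := congrArg (· * x) IH
    simpa [mul_assoc] using hb
  have s1' : ∀ x : S, Gi * (G' * (G * x)) = G' * (G * (Gi' * x)) := fun x => by
    conv_lhs => rw [show x = G' * (Gi' * x) from (h3' x).symm]
    rw [← braid' (Gi' * x), h2']
  have s2' : ∀ x : S, Gi' * (Gi * (Gi' * x)) = Gi * (Gi' * (Gi * x)) := by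
    intro x
    have cancel : ∀ {y z : S}, G * (G' * (G * y)) = G * (G' * (G * z)) → y = z := by
      intro y z hyz
      have hb := congrArg (fun t => Gi * (Gi' * (Gi * t))) hyz
      simpa only [h2', h4'] using hb
    apply cancel
    rw [braid']
    simp only [h1', h2', h3', h4']
  have s4' : ∀ x : S, R * (Gi' * (Gi * x)) = Gi' * (Gi * (R' * x)) := fun x => by
    conv_lhs => rw [show R * (Gi' * (Gi * x))
      = Gi' * (Gi * (G * (G' * (R * (Gi' * (Gi * x)))))) from by
        simp only [h2', h4']]
    rw [← compat' (Gi' * (Gi * x))]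
    simp only [h3', h1']
  have s3' : ∀ x : S, Z * (G' * (Z * (Gi' * x)))
      = G * (G' * (Y * (Z * (Gi' * (Gi * x))))) := fun x => by
    conv_rhs => rw [hZ]
    conv_lhs => rw [hZ]
    simp only [mul_assoc]
    rw [s1' (Y * (Gi * (Gi' * x))), cYi' (Gi * (Gi' * x)), s2' x,
      cY' (G * (Y * (Gi * (Gi' * (Gi * x)))))]
  have main : ∀ x : S, R' * (Z * (G' * (Z * (Gi' * x))))
      = Z * (G' * (Z * (Gi' * (R' * x)))) := fun x => by
    rw [s3' x, compat' (Y * (Z * (Gi' * (Gi * x)))), IH' (Gi' * (Gi * x)),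
      s4' x, ← s3' (R' * x)]
  have gl := main 1
  simp only [mul_one] at gl
  simp only [mul_assoc]
  exact gl

lemma up12_eq {X : Matrix (Fin N × Fin N) (Fin N × Fin N) ℂ} : up12 X = up12A X := rfl

lemma up23_eq {X : Matrix (Fin N × Fin N) (Fin N × Fin N) ℂ} : up23 X = up23A X := rfl

lemma up12A_map {B : Type} [Ring B] (φ : A →+* B)
    (X : Matrix (Fin N × Fin N) (Fin N × Fin N) A) :
    (up12A X).map φ = up12A (X.map φ) := by
  ext p q
  simp [up12A, Matrix.map_apply, _root_.map_mul, apply_ite φ, _root_.map_one, _root_.map_zero]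

lemma up23A_map {B : Type} [Ring B] (φ : A →+* B)
    (X : Matrix (Fin N × Fin N) (Fin N × Fin N) A) :
    (up23A X).map φ = up23A (X.map φ) := by
  ext p q
  simp [up23A, Matrix.map_apply, _root_.map_mul, apply_ite φ, _root_.map_one, _root_.map_zero]

lemma copies_comm (m : ℕ) (FA FinvA : Matrix (Fin N × Fin N) (Fin N × Fin N) A)
    (M : Matrix (Fin N) (Fin N) A)
    (X : Matrix (Fin N × Fin N) (Fin N × Fin N) A)
    (hcX : ∀ i j (c : A), X i j * c = c * X i j) (n : ℕ) :
    ∀ q : ℕ, n + 1 ≤ q →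
      copies m FA FinvA M n * lift2 m X q = lift2 m X q * copies m FA FinvA M n := by
  induction n with
  | zero =>
    intro q hq
    exact liftV0_comm M X q (by omega) hcX
  | succ n ih =>
    intro q hq
    have hC : copies m FA FinvA M (n + 1)
        = lift2 m FA n * copies m FA FinvA M n * lift2 m FinvA n := rfl
    have c1 : lift2 m FA n * lift2 m X q = lift2 m X q * lift2 m FA n :=
      lift2_comm_far FA X n q (by omega) hcX
    have c2 : lift2 m FinvA n * lift2 m X q = lift2 m X q * lift2 m FinvA n :=
      lift2_comm_far FinvA X n q (by omega) hcX
    have c3 := ih q (by omega)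
    rw [hC]
    calc lift2 m FA n * copies m FA FinvA M n * lift2 m FinvA n * lift2 m X q
        = lift2 m FA n * (copies m FA FinvA M n * (lift2 m FinvA n * lift2 m X q)) := by
          simp only [mul_assoc]
      _ = lift2 m FA n * (copies m FA FinvA M n * (lift2 m X q * lift2 m FinvA n)) := by
          rw [c2]
      _ = lift2 m FA n * (copies m FA FinvA M n * lift2 m X q * lift2 m FinvA n) := by
          simp only [mul_assoc]
      _ = lift2 m FA n * (lift2 m X q * copies m FA FinvA M n * lift2 m FinvA n) := by
          rw [c3]
      _ = lift2 m FA n * lift2 m X q * (copies m FA FinvA M n * lift2 m FinvA n) := by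
          simp only [mul_assoc]
      _ = lift2 m X q * lift2 m FA n * (copies m FA FinvA M n * lift2 m FinvA n) := by
          rw [c1]
      _ = lift2 m X q * (lift2 m FA n * copies m FA FinvA M n * lift2 m FinvA n) := by
          simp only [mul_assoc]

end QMA

open QMA in
/-- For a quantum matrix algebra built from a compatible pair `{R,F}`, the
defining relation `R₁ M_{1̄} M_{2̄} = M_{1̄} M_{2̄} R₁` propagates to all
consecutive pairs of copies: `R_k M_{k̄} M_{k+1‾} = M_{k̄} M_{k+1‾} R_k`
in `Mat_{N^{k+1}}(A)`. -/
theorem qm_relation_propagates (N : ℕ) (hN : 1 ≤ N)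
    (R Rinv F Finv : Matrix (Fin N × Fin N) (Fin N × Fin N) ℂ)
    (hYBR : up12 R * up23 R * up12 R = up23 R * up12 R * up23 R)
    (hYBF : up12 F * up23 F * up12 F = up23 F * up12 F * up23 F)
    (hRinv : R * Rinv = 1 ∧ Rinv * R = 1)
    (hFinv : F * Finv = 1 ∧ Finv * F = 1)
    (hcomp : up12 R * up23 F * up12 F = up23 F * up12 F * up23 R
      ∧ up12 F * up23 F * up12 R = up23 R * up12 F * up23 F)
    (A : Type) [Ring A] [Algebra ℂ A] (M : Matrix (Fin N) (Fin N) A)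
    (hQM : R.map (algebraMap ℂ A) * lift1 M
          * (F.map (algebraMap ℂ A) * lift1 M * Finv.map (algebraMap ℂ A))
        = lift1 M * (F.map (algebraMap ℂ A) * lift1 M * Finv.map (algebraMap ℂ A))
          * R.map (algebraMap ℂ A)) :
    ∀ k : ℕ, 1 ≤ k →
      lift2 (k + 1) (R.map (algebraMap ℂ A)) (k - 1)
          * copies (k + 1) (F.map (algebraMap ℂ A)) (Finv.map (algebraMap ℂ A)) M (k - 1)
          * copies (k + 1) (F.map (algebraMap ℂ A)) (Finv.map (algebraMap ℂ A)) M k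
        = copies (k + 1) (F.map (algebraMap ℂ A)) (Finv.map (algebraMap ℂ A)) M (k - 1)
          * copies (k + 1) (F.map (algebraMap ℂ A)) (Finv.map (algebraMap ℂ A)) M k
          * lift2 (k + 1) (R.map (algebraMap ℂ A)) (k - 1) := by
  intro k hk
  set φ : ℂ →+* A := algebraMap ℂ A with hφ
  set Fφ : Matrix (Fin N × Fin N) (Fin N × Fin N) A := F.map φ with hFφ
  set Finvφ : Matrix (Fin N × Fin N) (Fin N × Fin N) A := Finv.map φ with hFinvφ
  set Rφ : Matrix (Fin N × Fin N) (Fin N × Fin N) A := R.map φ with hRφ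
  have hcF : ∀ i j (c : A), Fφ i j * c = c * Fφ i j := fun i j c => by
    rw [hFφ, Matrix.map_apply]; exact Algebra.commutes _ _
  have hcFi : ∀ i j (c : A), Finvφ i j * c = c * Finvφ i j := fun i j c => by
    rw [hFinvφ, Matrix.map_apply]; exact Algebra.commutes _ _
  have hFi : Fφ * Finvφ = 1 := by
    rw [hFφ, hFinvφ, ← Matrix.map_mul, hFinv.1,
      Matrix.map_one _ (_root_.map_zero φ) (_root_.map_one φ)]
  have hiF : Finvφ * Fφ = 1 := by
    rw [hFφ, hFinvφ, ← Matrix.map_mul, hFinv.2,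
      Matrix.map_one _ (_root_.map_zero φ) (_root_.map_one φ)]
  have hbrA : up12A Fφ * up23A Fφ * up12A Fφ = up23A Fφ * up12A Fφ * up23A Fφ := by
    have hb := congrArg (fun X => X.map (⇑φ)) hYBF
    simpa only [up12_eq, up23_eq, Matrix.map_mul, up12A_map, up23A_map] using hb
  have hcpA : up12A Fφ * up23A Fφ * up12A Rφ = up23A Rφ * up12A Fφ * up23A Fφ := by
    have hb := congrArg (fun X => X.map (⇑φ)) hcomp.2
    simpa only [up12_eq, up23_eq, Matrix.map_mul, up12A_map, up23A_map] using hb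
  have key : ∀ p : ℕ, p + 2 ≤ k + 1 →
      lift2 (k + 1) Rφ p * copies (k + 1) Fφ Finvφ M p
          * copies (k + 1) Fφ Finvφ M (p + 1)
        = copies (k + 1) Fφ Finvφ M p * copies (k + 1) Fφ Finvφ M (p + 1)
          * lift2 (k + 1) Rφ p := by
    intro p
    induction p with
    | zero =>
      intro _
      have h01 : 0 + 1 < k + 1 := by omega
      have e1 : ∀ X Y : Matrix (Fin N × Fin N) (Fin N × Fin N) A,
          lift2 (k + 1) X 0 * lift2 (k + 1) Y 0 = lift2 (k + 1) (X * Y) 0 :=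
        fun X Y => lift2_mul X Y 0 h01
      have hC0 : copies (k + 1) Fφ Finvφ M 0 = lift2 (k + 1) (lift1 M) 0 := by
        show liftV (k + 1) M 0 = _
        exact liftV_eq_lift2 M (by omega)
      have hC1 : copies (k + 1) Fφ Finvφ M 1
          = lift2 (k + 1) Fφ 0 * copies (k + 1) Fφ Finvφ M 0 * lift2 (k + 1) Finvφ 0 :=
        rfl
      rw [hC1, hC0]
      simp only [e1]
      rw [hQM]
    | succ p ih =>
      intro hp2
      have h3 : p + 2 < k + 1 := by omega
      have hp1 : p + 1 < k + 1 := by omega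
      have hp11 : p + 1 + 1 < k + 1 := by omega
      have hCp2 : copies (k + 1) Fφ Finvφ M (p + 1 + 1)
          = lift2 (k + 1) Fφ (p + 1) * copies (k + 1) Fφ Finvφ M (p + 1)
            * lift2 (k + 1) Finvφ (p + 1) := rfl
      rw [hCp2]
      have braid : lift2 (k + 1) Fφ p * lift2 (k + 1) Fφ (p + 1) * lift2 (k + 1) Fφ p
          = lift2 (k + 1) Fφ (p + 1) * lift2 (k + 1) Fφ p * lift2 (k + 1) Fφ (p + 1) := by
        calc lift2 (k + 1) Fφ p * lift2 (k + 1) Fφ (p + 1) * lift2 (k + 1) Fφ p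
            = lift3 (k + 1) (up12A Fφ * up23A Fφ * up12A Fφ) p := by
              rw [← lift3_up12 Fφ p h3, ← lift3_up23 Fφ p h3,
                lift3_mul _ _ p h3, lift3_mul _ _ p h3]
          _ = lift3 (k + 1) (up23A Fφ * up12A Fφ * up23A Fφ) p := by rw [hbrA]
          _ = lift2 (k + 1) Fφ (p + 1) * lift2 (k + 1) Fφ p * lift2 (k + 1) Fφ (p + 1) := by
              rw [← lift3_mul _ _ p h3, ← lift3_mul _ _ p h3,
                lift3_up12 Fφ p h3, lift3_up23 Fφ p h3]
      have compat : lift2 (k + 1) Fφ p * lift2 (k + 1) Fφ (p + 1) * lift2 (k + 1) Rφ p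
          = lift2 (k + 1) Rφ (p + 1) * lift2 (k + 1) Fφ p * lift2 (k + 1) Fφ (p + 1) := by
        calc lift2 (k + 1) Fφ p * lift2 (k + 1) Fφ (p + 1) * lift2 (k + 1) Rφ p
            = lift3 (k + 1) (up12A Fφ * up23A Fφ * up12A Rφ) p := by
              rw [← lift3_up12 Fφ p h3, ← lift3_up23 Fφ p h3, ← lift3_up12 Rφ p h3,
                lift3_mul _ _ p h3, lift3_mul _ _ p h3]
          _ = lift3 (k + 1) (up23A Rφ * up12A Fφ * up23A Fφ) p := by rw [hcpA]
          _ = lift2 (k + 1) Rφ (p + 1) * lift2 (k + 1) Fφ p * lift2 (k + 1) Fφ (p + 1) := by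
              rw [← lift3_mul _ _ p h3, ← lift3_mul _ _ p h3,
                lift3_up12 Fφ p h3, lift3_up23 Rφ p h3, lift3_up23 Fφ p h3]
      refine step_abstract (mul_assoc _ _ _) ?_ ?_ ?_ ?_ braid compat ?_ ?_ (ih (by omega))
      · rw [lift2_mul _ _ p hp1, hFi, lift2_one]
      · rw [lift2_mul _ _ p hp1, hiF, lift2_one]
      · rw [lift2_mul _ _ (p + 1) hp11, hFi, lift2_one]
      · rw [lift2_mul _ _ (p + 1) hp11, hiF, lift2_one]
      · exact copies_comm (k + 1) Fφ Finvφ M Fφ hcF p (p + 1) (by omega)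
      · exact copies_comm (k + 1) Fφ Finvφ M Finvφ hcFi p (p + 1) (by omega)
  have hmain := key (k - 1) (by omega)
  rwa [Nat.sub_add_cancel hk] at hmain
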